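/- Let γ denote the standard Gaussian probability measure on ℝ (mean 0, variance 1), let n ≥ 1, and let a, b : Fin n → ℝ. Then ∫_ℝ max_{i} (a i + b i · z) dγ(z) = max_{i} a i if and only if b is constant, i.e. b i = b j for all i, j. -/

import Mathlib

open MeasureTheory ProbabilityTheory

/-- The standard Gaussian probability measure on ℝ (mean 0, variance 1). -/
noncomputable def stdGaussian : Measure ℝ := gaussianReal 0 1

instance : IsProbabilityMeasure stdGaussian := by unfold _root_.stdGaussian; infer_instance

lemma integrable_id_stdGaussian : Integrable (fun z : ℝ => z) stdGaussian := by
  rw [_root_.stdGaussian, gaussianReal_of_var_ne_zero 0 one_ne_zero,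
    integrable_withDensity_iff (measurable_gaussianPDF 0 1)
      (Filter.Eventually.of_forall fun _ => ENNReal.ofReal_lt_top)]
  have h : ∀ x : ℝ, x * (gaussianPDF 0 1 x).toReal
      = (Real.sqrt (2 * Real.pi * 1))⁻¹ * (x ^ (1:ℝ) * Real.exp (-(1/2) * x ^ 2)) := by
    intro x
    rw [gaussianPDF, ENNReal.toReal_ofReal (gaussianPDFReal_nonneg 0 1 x), gaussianPDFReal]
    rw [Real.rpow_one]
    push_cast
    ring_nf
  simp_rw [h]
  exact ((integrable_rpow_mul_exp_neg_mul_sq (by norm_num : (0:ℝ) < 1/2)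
    (by norm_num : (-1:ℝ) < 1))).const_mul _

lemma integral_id_stdGaussian : ∫ z, z ∂stdGaussian = 0 := by
  have hmap : (_root_.stdGaussian).map (fun x => (-1 : ℝ) * x) = _root_.stdGaussian := by
    have h1 : (⟨(-1:ℝ)^2, sq_nonneg _⟩ : NNReal) * 1 = 1 := by ext; norm_num
    rw [_root_.stdGaussian, gaussianReal_map_const_mul (-1)]
    congr 1
    · ring
  have h1 : ∫ z, z ∂stdGaussian = ∫ z, (-1 : ℝ) * z ∂stdGaussian := by
    conv_lhs => rw [← hmap]
    exact integral_map (μ := stdGaussian) (φ := fun x : ℝ => -1 * x) (f := fun z : ℝ => z)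
      (measurable_id.const_mul (-1)).aemeasurable measurable_id.aestronglyMeasurable
  simp only [neg_one_mul] at h1
  rw [integral_neg] at h1
  linarith

lemma integrable_finset_sup' {ι : Type*} {μ : Measure ℝ} {s : Finset ι} (hs : s.Nonempty)
    (f : ι → ℝ → ℝ) (hf : ∀ i ∈ s, Integrable (f i) μ) :
    Integrable (fun z => s.sup' hs fun i => f i z) μ := by
  induction hs using Finset.Nonempty.cons_induction with
  | singleton i => simpa using hf i (Finset.mem_singleton_self i)
  | cons i t hi ht ih =>
    simp only [Finset.sup'_cons (H := ht)]
    exact (hf i (Finset.mem_cons_self i t)).sup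
      (ih fun j hj => hf j (Finset.mem_cons.2 (Or.inr hj)))

lemma integrable_affine_stdGaussian (c d : ℝ) :
    Integrable (fun z : ℝ => c + d * z) stdGaussian :=
  (integrable_const c).add (integrable_id_stdGaussian.const_mul d)

lemma integral_affine_stdGaussian (c d : ℝ) :
    ∫ z, (c + d * z) ∂stdGaussian = c := by
  rw [integral_add (integrable_const c) (integrable_id_stdGaussian.const_mul d),
    integral_const, integral_const_mul, integral_id_stdGaussian]
  simp

/-- the Gaussian expectation of the maximum of finitely many affine functions
equals the maximum of the intercepts if and only if all slopes are equal. -/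
theorem stmt_3 (n : ℕ) (hn : 1 ≤ n) (a b : Fin n → ℝ) :
    (∫ z, Finset.univ.sup' ⟨⟨0, hn⟩, Finset.mem_univ _⟩ (fun i => a i + b i * z)
        ∂stdGaussian) =
      Finset.univ.sup' ⟨⟨0, hn⟩, Finset.mem_univ _⟩ a ↔ ∀ i j : Fin n, b i = b j := by
  set ne : (Finset.univ : Finset (Fin n)).Nonempty := ⟨⟨0, hn⟩, Finset.mem_univ _⟩
  constructor
  · intro h
    obtain ⟨k, -, hak⟩ := Finset.exists_mem_eq_sup' ne a
    suffices hkey : ∀ i, b i = b k by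
      intro i j; rw [hkey i, hkey j]
    intro i
    by_contra hbi
    set c : ℝ := b i - b k with hc
    have hc0 : c ≠ 0 := sub_ne_zero.2 hbi
    set F : ℝ → ℝ := fun z => Finset.univ.sup' ne (fun i => a i + b i * z) with hF
    set g : ℝ → ℝ := fun z => F z - (a k + b k * z) with hgdef
    have hg0 : ∀ z, 0 ≤ g z := fun z =>
      sub_nonneg.2 (Finset.le_sup' (fun i => a i + b i * z) (Finset.mem_univ k))
    have hFint : Integrable F stdGaussian :=
      integrable_finset_sup' ne (fun i z => a i + b i * z)
        (fun i _ => integrable_affine_stdGaussian (a i) (b i))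
    have hgint : Integrable g stdGaussian :=
      hFint.sub (integrable_affine_stdGaussian (a k) (b k))
    have hgzero : ∫ z, g z ∂stdGaussian = 0 := by
      rw [hgdef]
      rw [integral_sub hFint (integrable_affine_stdGaussian (a k) (b k)),
        integral_affine_stdGaussian]
      rw [hF]
      rw [h, hak, sub_self]
    have hgae : g =ᵐ[_root_.stdGaussian] 0 :=
      (integral_eq_zero_iff_of_nonneg_ae (Filter.Eventually.of_forall hg0) hgint).1 hgzero
    have hnull : _root_.stdGaussian {z | g z ≠ 0} = 0 := by
      have h2 := hgae
      rw [Filter.EventuallyEq, MeasureTheory.ae_iff] at h2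
      simpa using h2
    have hvolnull : MeasureTheory.volume {z : ℝ | g z ≠ 0} = 0 := by
      have habs : MeasureTheory.volume ≪ _root_.stdGaussian := by
        rw [_root_.stdGaussian]; exact gaussianReal_absolutelyContinuous' 0 one_ne_zero
      exact habs hnull
    set U : Set ℝ := (fun z => (a i - a k) + c * z) ⁻¹' Set.Ioi 0 with hU
    have hUopen : IsOpen U :=
      (isOpen_Ioi).preimage (by continuity)
    have hz₀ : (a k - a i + 1) / c ∈ U := by
      simp only [hU, Set.mem_preimage, Set.mem_Ioi]
      rw [mul_div_cancel₀ _ hc0]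
      ring_nf
      norm_num
    have hUsub : U ⊆ {z : ℝ | g z ≠ 0} := by
      intro z hz
      simp only [hU, Set.mem_preimage, Set.mem_Ioi] at hz
      have hFi : a i + b i * z ≤ F z :=
        Finset.le_sup' (fun i => a i + b i * z) (Finset.mem_univ i)
      have hgpos : 0 < g z := by
        have hlt : a k + b k * z < a i + b i * z := by
          rw [hc] at hz; nlinarith
        simp only [hgdef]
        have := lt_of_lt_of_le hlt hFi
        linarith
      exact ne_of_gt hgpos
    have hpos : 0 < MeasureTheory.volume U :=
      hUopen.measure_pos MeasureTheory.volume ⟨_, hz₀⟩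
    have hzero : MeasureTheory.volume U = 0 :=
      le_antisymm (hvolnull ▸ measure_mono hUsub) (zero_le)
    exact absurd hzero (ne_of_gt hpos)
  · intro hb
    have hsup : ∀ z : ℝ, Finset.univ.sup' ne (fun i => a i + b i * z)
        = Finset.univ.sup' ne a + b ⟨0, hn⟩ * z := by
      intro z
      have heq : (fun i => a i + b i * z) = fun i => a i + b ⟨0, hn⟩ * z := by
        funext i; rw [hb i ⟨0, hn⟩]
      rw [heq, ← Finset.sup'_add]
    simp_rw [hsup]
    exact integral_affine_stdGaussian _ _
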